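/- Let U be a bounded open set in ℝ^d, let n be a positive integer, and let γ ∈ (0,1]. Then the set 𝒞_n^γ(U) is compact in the C¹ topology; equivalently, every sequence ⟨c_ℓ⟩ of curves in 𝒞_n^γ(U) has a subsequence ⟨c_{ℓ_k}⟩ and a C¹ curve c ∈ 𝒞_n^γ(U) such that c_{ℓ_k} → c and c′_{ℓ_k} → c′ uniformly on [−1/n, 1/n]. -/

import Mathlib

open Set Filter Topology

/-- `K_n`: the points of `U` at distance at least `1/n` from the boundary of `U`. -/
def Kset {d : ℕ} (U : Set (EuclideanSpace ℝ (Fin d))) (n : ℕ) :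
    Set (EuclideanSpace ℝ (Fin d)) :=
  {u ∈ U | ∀ x ∈ frontier U, 1 / (n : ℝ) ≤ ‖u - x‖}

/-- `𝒞_n^γ(U)`: unit-speed `C¹` curves `c : [-1/n, 1/n] → U` whose derivative satisfies
`‖c'(s₂) - c'(s₁)‖ ≤ n |s₂ - s₁|^γ` and whose image lies in `K_n`. -/
def CurveClass {d : ℕ} (U : Set (EuclideanSpace ℝ (Fin d))) (n : ℕ) (γ : ℝ) :
    Set (ℝ → EuclideanSpace ℝ (Fin d)) :=
  {c | ContDiffOn ℝ 1 c (Icc (-(1 / (n : ℝ))) (1 / n)) ∧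
    (∀ s ∈ Icc (-(1 / (n : ℝ))) (1 / n),
      ‖derivWithin c (Icc (-(1 / (n : ℝ))) (1 / n)) s‖ = 1) ∧
    (∀ s₁ ∈ Icc (-(1 / (n : ℝ))) (1 / n), ∀ s₂ ∈ Icc (-(1 / (n : ℝ))) (1 / n),
      ‖derivWithin c (Icc (-(1 / (n : ℝ))) (1 / n)) s₂ -
          derivWithin c (Icc (-(1 / (n : ℝ))) (1 / n)) s₁‖ ≤ (n : ℝ) * |s₂ - s₁| ^ γ) ∧
    ∀ s ∈ Icc (-(1 / (n : ℝ))) (1 / n), c s ∈ Kset U n}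

open Classical in
/-- Extend a continuous function on `closure U` to all of `ℝ^d` by zero. -/
noncomputable def extendCl {d : ℕ} (U : Set (EuclideanSpace ℝ (Fin d)))
    (f : C(closure U, ℝ)) : EuclideanSpace ℝ (Fin d) → ℝ :=
  fun x => if hx : x ∈ closure U then f ⟨x, hx⟩ else 0

/-- `ℱ_n^γ(U)`: those `f ∈ C(U̅)` such that for some curve `c ∈ 𝒞_n^γ(U)` one has
`|f (c s) - f (c 0)| ≤ n |s|` for all `s ∈ [-1/n, 1/n]`. -/
def Fclass {d : ℕ} (U : Set (EuclideanSpace ℝ (Fin d))) (n : ℕ) (γ : ℝ) :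
    Set C(closure U, ℝ) :=
  {f | ∃ c ∈ CurveClass U n γ, ∀ s ∈ Icc (-(1 / (n : ℝ))) (1 / n),
    |extendCl U f (c s) - extendCl U f (c 0)| ≤ (n : ℝ) * |s|}

section Aux
open intervalIntegral
variable {E : Type*} [NormedAddCommGroup E] [NormedSpace ℝ E] [CompleteSpace E]

lemma ftc_icc {a b : ℝ} (hab : a < b) {f : ℝ → E} (hf : ContDiffOn ℝ 1 f (Icc a b))
    {s t : ℝ} (hs : s ∈ Icc a b) (ht : t ∈ Icc a b) :
    ∫ x in s..t, derivWithin f (Icc a b) x = f t - f s := by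
  have hcd : ContinuousOn (derivWithin f (Icc a b)) (Icc a b) :=
    hf.continuousOn_derivWithin (uniqueDiffOn_Icc hab) le_rfl
  have key : ∀ {s t : ℝ}, s ∈ Icc a b → t ∈ Icc a b → s ≤ t →
      ∫ x in s..t, derivWithin f (Icc a b) x = f t - f s := by
    intro s t hs ht hst
    apply integral_eq_sub_of_hasDeriv_right_of_le hst
      (hf.continuousOn.mono (Icc_subset_Icc hs.1 ht.2))
    · intro x hx
      have hxI : x ∈ Ioo a b := ⟨lt_of_le_of_lt hs.1 hx.1, lt_of_lt_of_le hx.2 ht.2⟩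
      have hmem : Icc a b ∈ 𝓝 x := Icc_mem_nhds hxI.1 hxI.2
      have hd : HasDerivWithinAt f (derivWithin f (Icc a b) x) (Icc a b) x :=
        (hf.differentiableOn one_ne_zero x (Ioo_subset_Icc_self hxI)).hasDerivWithinAt
      exact (hd.hasDerivAt hmem).hasDerivWithinAt
    · exact (hcd.mono ((uIcc_of_le hst).symm ▸ Icc_subset_Icc hs.1 ht.2)).intervalIntegrable
  rcases le_total s t with h | h
  · exact key hs ht h
  · rw [integral_symm, key ht hs h]; abel

end Aux

open scoped BoundedContinuousFunction

set_option maxHeartbeats 1000000 in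
set_option synthInstance.maxHeartbeats 400000 in
/-- Compactness of `𝒞_n^γ(U)` in the `C¹` topology, in sequential form: every sequence of
curves in `𝒞_n^γ(U)` has a subsequence converging, together with its derivatives, uniformly
on `[-1/n, 1/n]` to a curve in `𝒞_n^γ(U)`. -/
theorem curveClass_seq_compact {d : ℕ} (U : Set (EuclideanSpace ℝ (Fin d)))
    (hU : IsOpen U) (hUb : Bornology.IsBounded U) (n : ℕ) (hn : 0 < n) (γ : ℝ)
    (hγ : γ ∈ Ioc (0 : ℝ) 1) (c : ℕ → ℝ → EuclideanSpace ℝ (Fin d))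
    (hc : ∀ ℓ, c ℓ ∈ CurveClass U n γ) :
    ∃ φ : ℕ → ℕ, StrictMono φ ∧ ∃ c₀ ∈ CurveClass U n γ,
      TendstoUniformlyOn (fun k => c (φ k)) c₀ atTop (Icc (-(1 / (n : ℝ))) (1 / n)) ∧
      TendstoUniformlyOn
        (fun k => derivWithin (c (φ k)) (Icc (-(1 / (n : ℝ))) (1 / n)))
        (derivWithin c₀ (Icc (-(1 / (n : ℝ))) (1 / n))) atTop
        (Icc (-(1 / (n : ℝ))) (1 / n)) := by
  classical
  set b : ℝ := 1 / (n : ℝ) with hbdef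
  have hb : 0 < b := by positivity
  have hab : -b < b := by linarith
  set I : Set ℝ := Icc (-b) b with hIdef
  have h0I : (0:ℝ) ∈ I := ⟨by linarith, hb.le⟩
  set g : ℕ → ℝ → EuclideanSpace ℝ (Fin d) := fun ℓ => derivWithin (c ℓ) I with hgdef
  have hgc : ∀ ℓ, ContinuousOn (g ℓ) I :=
    fun ℓ => (hc ℓ).1.continuousOn_derivWithin (uniqueDiffOn_Icc hab) le_rfl
  -- the family of pairs as bounded continuous functions on I
  let F : ℕ → ↥I →ᵇ (EuclideanSpace ℝ (Fin d) × EuclideanSpace ℝ (Fin d)) :=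
    fun ℓ => BoundedContinuousFunction.mkOfCompact
      ⟨fun x => (c ℓ x, g ℓ x), ((hc ℓ).1.continuousOn.restrict).prodMk ((hgc ℓ).restrict)⟩
  -- Lipschitz bound on the curves
  have hLip : ∀ ℓ, ∀ x ∈ I, ∀ y ∈ I, ‖c ℓ y - c ℓ x‖ ≤ 1 * ‖y - x‖ := by
    intro ℓ x hx y hy
    exact Convex.norm_image_sub_le_of_norm_derivWithin_le ((hc ℓ).1.differentiableOn one_ne_zero)
      (fun z hz => le_of_eq ((hc ℓ).2.1 z hz)) (convex_Icc _ _) hx hy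
  -- Equicontinuity
  have hEq : Equicontinuous (fun ℓ => ⇑(F ℓ)) := by
    intro x₀
    rw [Metric.equicontinuousAt_iff]
    intro ε hε
    set ω : ℝ → ℝ := fun t => max t ((n : ℝ) * t ^ γ) with hω
    have hω0 : ω 0 = 0 := by
      simp [hω, Real.zero_rpow (ne_of_gt hγ.1)]
    have hωc : ContinuousAt ω 0 :=
      continuousAt_id.max (continuousAt_const.mul
        (Real.continuousAt_rpow_const 0 γ (Or.inr hγ.1.le)))
    have := (Metric.continuousAt_iff.1 hωc) ε hε
    obtain ⟨δ, hδ, hδ'⟩ := this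
    refine ⟨δ, hδ, fun y hy ℓ => ?_⟩
    have hxy : dist (x₀ : ℝ) (y : ℝ) < δ := by
      rw [dist_comm, ← Subtype.dist_eq]; exact hy
    have h1 : dist (c ℓ x₀) (c ℓ y) ≤ dist (x₀ : ℝ) y := by
      rw [dist_eq_norm, dist_eq_norm]
      simpa using hLip ℓ y y.2 x₀ x₀.2
    have h2 : dist (g ℓ x₀) (g ℓ y) ≤ (n : ℝ) * dist (x₀ : ℝ) y ^ γ := by
      rw [dist_eq_norm, Real.dist_eq]
      exact (hc ℓ).2.2.1 (y : ℝ) y.2 (x₀ : ℝ) x₀.2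
    have hd0 : dist (F ℓ x₀) (F ℓ y) ≤ ω (dist (x₀ : ℝ) y) := by
      rw [show (F ℓ x₀) = (c ℓ x₀, g ℓ x₀) from rfl, show (F ℓ y) = (c ℓ y, g ℓ y) from rfl,
        Prod.dist_eq]
      exact max_le_max h1 h2
    have : |ω (dist (x₀ : ℝ) y) - ω 0| < ε := by
      have : dist (dist (x₀ : ℝ) y) 0 < δ := by
        rw [Real.dist_eq, sub_zero, abs_of_nonneg dist_nonneg]; exact hxy
      simpa [Real.dist_eq] using hδ' this
    calc dist (F ℓ x₀) (F ℓ y) ≤ ω (dist (x₀ : ℝ) y) := hd0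
      _ ≤ |ω (dist (x₀ : ℝ) y) - ω 0| := by rw [hω0, sub_zero]; exact le_abs_self _
      _ < ε := this
  -- the target compact set
  have hS : IsCompact ((closure U) ×ˢ Metric.closedBall (0 : EuclideanSpace ℝ (Fin d)) 1) :=
    hUb.isCompact_closure.prod (isCompact_closedBall _ _)
  have hmem : ∀ (f : ↥I →ᵇ (EuclideanSpace ℝ (Fin d) × EuclideanSpace ℝ (Fin d))) (x : ↥I),
      f ∈ range F → f x ∈ (closure U) ×ˢ Metric.closedBall (0 : EuclideanSpace ℝ (Fin d)) 1 := by
    rintro f x ⟨ℓ, rfl⟩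
    refine ⟨subset_closure ((hc ℓ).2.2.2 x x.2).1, ?_⟩
    show g ℓ x ∈ Metric.closedBall 0 1
    rw [Metric.mem_closedBall, dist_zero_right]
    exact le_of_eq ((hc ℓ).2.1 x x.2)
  have hEq' : Equicontinuous ((↑) : ↥(range F) → ↥I → EuclideanSpace ℝ (Fin d) × EuclideanSpace ℝ (Fin d)) := by
    have h2 := hEq.comp (rangeSplitting F)
    convert h2 using 1
    funext a
    exact (congrArg _ (apply_rangeSplitting F a)).symm
  have hclos : IsCompact (closure (range F)) :=
    BoundedContinuousFunction.arzela_ascoli _ hS (range F) hmem hEq'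
  obtain ⟨h, -, φ, hφ, htend⟩ := hclos.isSeqCompact (fun ℓ => subset_closure (mem_range_self ℓ))
  have hTU : TendstoUniformly (fun k => ⇑(F (φ k))) (⇑h) atTop :=
    BoundedContinuousFunction.tendsto_iff_tendstoUniformly.1 htend
  set u : ↥I → EuclideanSpace ℝ (Fin d) := fun x => (h x).1 with hudef
  set v : ↥I → EuclideanSpace ℝ (Fin d) := fun x => (h x).2 with hvdef
  have hTUc : TendstoUniformly (fun k (x : ↥I) => c (φ k) x) u atTop := by
    rw [Metric.tendstoUniformly_iff] at hTU ⊢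
    intro ε hε
    filter_upwards [hTU ε hε] with k hk x
    refine lt_of_le_of_lt ?_ (hk x)
    rw [Prod.dist_eq]
    exact le_max_left _ _
  have hTUg : TendstoUniformly (fun k (x : ↥I) => g (φ k) x) v atTop := by
    rw [Metric.tendstoUniformly_iff] at hTU ⊢
    intro ε hε
    filter_upwards [hTU ε hε] with k hk x
    refine lt_of_le_of_lt ?_ (hk x)
    rw [Prod.dist_eq]
    exact le_max_right _ _
  have hpoint_c : ∀ x : ↥I, Tendsto (fun k => c (φ k) (x : ℝ)) atTop (𝓝 (u x)) :=
    fun x => hTUc.tendsto_at x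
  have hpoint_g : ∀ x : ↥I, Tendsto (fun k => g (φ k) (x : ℝ)) atTop (𝓝 (v x)) :=
    fun x => hTUg.tendsto_at x
  have hvcont : Continuous v := continuous_snd.comp h.continuous
  set V : ℝ → EuclideanSpace ℝ (Fin d) := fun t => v (projIcc (-b) b hab.le t) with hVdef
  have hVc : Continuous V := hvcont.comp continuous_projIcc
  have hVI : ∀ (t) (ht : t ∈ I), V t = v ⟨t, ht⟩ := fun t ht => by
    simp only [hVdef, projIcc_of_mem hab.le ht]
  set z0 : ↥I := ⟨0, h0I⟩ with hz0def
  set c₀ : ℝ → EuclideanSpace ℝ (Fin d) := fun t => u z0 + ∫ x in (0:ℝ)..t, V x with hc₀def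
  have hder : ∀ t : ℝ, HasDerivAt c₀ (V t) t := fun t =>
    ((hVc.integral_hasStrictDerivAt 0 t).hasDerivAt).const_add _
  have hderiv_eq : deriv c₀ = V := funext fun t => (hder t).deriv
  have hCD : ContDiff ℝ 1 c₀ :=
    contDiff_one_iff_deriv.2 ⟨fun t => (hder t).differentiableAt, hderiv_eq ▸ hVc⟩
  have hdw : ∀ t ∈ I, derivWithin c₀ I t = V t := fun t ht =>
    ((hder t).hasDerivWithinAt).derivWithin ((uniqueDiffOn_Icc hab) t ht)
  have hsub : ∀ (t) (_ : t ∈ I), uIoc (0:ℝ) t ⊆ I := fun t ht =>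
    uIoc_subset_uIcc.trans (uIcc_subset_Icc h0I ht)
  have hkey : ∀ (t) (ht : t ∈ I), c₀ t = u ⟨t, ht⟩ := by
    intro t ht
    have hIt : ∀ k, c (φ k) t = c (φ k) 0 + ∫ x in (0:ℝ)..t, g (φ k) x := by
      intro k
      rw [ftc_icc hab (hc (φ k)).1 h0I ht]
      abel
    have hint : Tendsto (fun k => ∫ x in (0:ℝ)..t, g (φ k) x) atTop
        (𝓝 (∫ x in (0:ℝ)..t, V x)) := by
      apply intervalIntegral.tendsto_integral_filter_of_dominated_convergence (fun _ => (1:ℝ))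
      · exact Eventually.of_forall fun k =>
          ((hgc (φ k)).mono (hsub t ht)).aestronglyMeasurable measurableSet_uIoc
      · exact Eventually.of_forall fun k => Eventually.of_forall fun x hx =>
          le_of_eq ((hc (φ k)).2.1 x (hsub t ht hx))
      · exact intervalIntegrable_const
      · exact Eventually.of_forall fun x hx => by
          rw [hVI x (hsub t ht hx)]; exact hpoint_g ⟨x, hsub t ht hx⟩
    have hL : Tendsto (fun k => c (φ k) t) atTop (𝓝 (u z0 + ∫ x in (0:ℝ)..t, V x)) := by
      simp only [hIt]
      exact (hpoint_c z0).add hint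
    exact (tendsto_nhds_unique (hpoint_c ⟨t, ht⟩) hL).symm
  refine ⟨φ, hφ, c₀, ⟨hCD.contDiffOn, ?_, ?_, ?_⟩, ?_, ?_⟩
  · -- unit speed
    intro s hs
    rw [hdw s hs, hVI s hs]
    have h1 : Tendsto (fun k => ‖g (φ k) s‖) atTop (𝓝 ‖v ⟨s, hs⟩‖) := (hpoint_g ⟨s, hs⟩).norm
    have h2 : (fun k => ‖g (φ k) s‖) = fun _ => (1:ℝ) := funext fun k => (hc (φ k)).2.1 s hs
    rw [h2] at h1
    exact tendsto_nhds_unique h1 tendsto_const_nhds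
  · -- Hölder condition
    intro s₁ hs₁ s₂ hs₂
    rw [hdw s₂ hs₂, hVI s₂ hs₂, hdw s₁ hs₁, hVI s₁ hs₁]
    refine le_of_tendsto ((hpoint_g ⟨s₂, hs₂⟩).sub (hpoint_g ⟨s₁, hs₁⟩)).norm ?_
    exact Eventually.of_forall fun k => (hc (φ k)).2.2.1 s₁ hs₁ s₂ hs₂
  · -- image in Kset
    intro s hs
    rw [hkey s hs]
    set p := u ⟨s, hs⟩ with hpdef
    have hp := hpoint_c ⟨s, hs⟩
    have hcl : p ∈ closure U :=
      mem_closure_of_tendsto hp (Eventually.of_forall fun k => ((hc (φ k)).2.2.2 s hs).1)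
    have hfr : ∀ x ∈ frontier U, 1 / (n : ℝ) ≤ ‖p - x‖ := by
      intro x hx
      refine ge_of_tendsto ((hp.sub tendsto_const_nhds).norm) ?_
      exact Eventually.of_forall fun k => ((hc (φ k)).2.2.2 s hs).2 x hx
    have hpU : p ∈ U := by
      by_contra hpU
      have hpf : p ∈ frontier U := by
        rw [hU.frontier_eq]; exact ⟨hcl, hpU⟩
      have h1n := hfr p hpf
      rw [sub_self, norm_zero] at h1n
      have : (0:ℝ) < 1 / (n : ℝ) := hb
      linarith
    exact ⟨hpU, hfr⟩
  · -- uniform convergence of the curves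
    rw [tendstoUniformlyOn_iff_tendstoUniformly_comp_coe]
    have e : (c₀ ∘ ((↑) : ↥I → ℝ)) = u := funext fun x => hkey x.1 x.2
    rw [e]
    exact hTUc
  · -- uniform convergence of the derivatives
    rw [tendstoUniformlyOn_iff_tendstoUniformly_comp_coe]
    have e : (derivWithin c₀ I ∘ ((↑) : ↥I → ℝ)) = v :=
      funext fun x => by rw [Function.comp_apply, hdw x.1 x.2, hVI x.1 x.2]
    rw [e]
    exact hTUg
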